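/- Transposition preserves q-gram multisets for q=2: for a character pair setting with z₁, z₂ single characters and strings x₁,...,x₅, the strings x₁ z₁ x₂ z₂ x₃ z₁ x₄ z₂ x₅ and x₁ z₁ x₄ z₂ x₃ z₁ x₂ z₂ x₅ have the same multiset of bigrams. -/
import Mathlib


/-- The multiset of bigrams (length-2 contiguous substrings) of a list. -/
def bigrams {β : Type*} (l : List β) : Multiset (β × β) :=
  (l.zip l.tail : List (β × β))

/-- The delimited form `$w$` of a string `w` over `α`, with `none` as the delimiter. -/
def delim {α : Type*} (w : List α) : List (Option α) :=
  none :: (w.map some ++ [none])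

/-- The bigram encoding of a string: the multiset of bigrams of its delimited form. -/
def Phi {α : Type*} (w : List α) : Multiset (Option α × Option α) :=
  bigrams (delim w)

/-- A string is uniquely decodable if it is the only string with its bigram encoding. -/
def UD {α : Type*} (w : List α) : Prop :=
  ∀ w' : List α, Phi w' = Phi w → w' = w

lemma bigrams_cons_cons {β : Type*} (a b : β) (l : List β) :
    bigrams (a :: b :: l) = (a, b) ::ₘ bigrams (b :: l) := rfl

lemma bigrams_split {β : Type*} (c : β) : ∀ (u v : List β),
    bigrams (u ++ c :: v) = bigrams (u ++ [c]) + bigrams (c :: v)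
  | [], v => by
      simp [bigrams]
  | [a], v => by
      simp [bigrams_cons_cons, bigrams]
  | a :: b :: u, v => by
      have ih := bigrams_split c (b :: u) v
      simp only [List.cons_append, bigrams_cons_cons] at *
      rw [ih, Multiset.cons_add]

lemma key {β : Type*} (a b : β) (A B C D E : List β) :
    bigrams (A ++ a :: (B ++ b :: (C ++ a :: (D ++ b :: E)))) =
    bigrams (A ++ a :: (D ++ b :: (C ++ a :: (B ++ b :: E)))) := by
  have h : ∀ X Y : List β,
      bigrams (A ++ a :: (X ++ b :: (C ++ a :: (Y ++ b :: E)))) =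
        bigrams (A ++ [a]) + bigrams ((a :: X) ++ [b]) + bigrams ((b :: C) ++ [a])
          + bigrams ((a :: Y) ++ [b]) + bigrams (b :: E) := by
    intro X Y
    rw [bigrams_split a A]
    rw [show a :: (X ++ b :: (C ++ a :: (Y ++ b :: E)))
        = (a :: X) ++ b :: (C ++ a :: (Y ++ b :: E)) by simp]
    rw [bigrams_split b (a :: X)]
    rw [show b :: (C ++ a :: (Y ++ b :: E)) = (b :: C) ++ a :: (Y ++ b :: E) by simp]
    rw [bigrams_split a (b :: C)]
    rw [show a :: (Y ++ b :: E) = (a :: Y) ++ b :: E by simp]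
    rw [bigrams_split b (a :: Y)]
    abel
  rw [h B D, h D B]
  abel

theorem transposition_preserves_bigrams {α : Type*} (z₁ z₂ : α) (x₁ x₂ x₃ x₄ x₅ : List α) :
    Phi (x₁ ++ [z₁] ++ x₂ ++ [z₂] ++ x₃ ++ [z₁] ++ x₄ ++ [z₂] ++ x₅)
      = Phi (x₁ ++ [z₁] ++ x₄ ++ [z₂] ++ x₃ ++ [z₁] ++ x₂ ++ [z₂] ++ x₅) := by
  have := key (some z₁) (some z₂) (none :: x₁.map some) (x₂.map some) (x₃.map some)
      (x₄.map some) (x₅.map some ++ [none])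
  simp only [Phi, delim, List.map_append, List.map_cons, List.map_nil, List.append_assoc,
    List.cons_append, List.nil_append, List.singleton_append] at *
  exact this
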